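/- Let (g,J) be a Lie algebra with almost complex structure, (E,I) with complex structure, ρ a representation, and N(x) = [I,ρ(Jx)] + I[ρ(x),I]. Then the Nijenhuis tensor of K = I × J on the semidirect product E ⋊ g satisfies N_K((v,x),(w,y)) = (N(x)w − N(y)v, N_J(x,y)) for all v,w ∈ E, x,y ∈ g, where N_J is the Nijenhuis tensor of J on g. -/

import Mathlib

attribute [local instance 100] LieRing.ofAssociativeRing

/-- The bracket of the semidirect product Lie algebra `E ⋊ g` attached to a
representation `ρ : g → End(E)` (with `E` abelian):
`[(v,x),(w,y)] = (ρ(x)w − ρ(y)v, [x,y])`. -/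
def sdBracket {g E : Type} [LieRing g] [LieAlgebra ℝ g]
    [AddCommGroup E] [Module ℝ E] (ρ : g →ₗ⁅ℝ⁆ Module.End ℝ E) :
    E × g → E × g → E × g :=
  fun a b => (ρ a.2 b.1 - ρ b.2 a.1, ⁅a.2, b.2⁆)

/-- Nijenhuis tensor of an endomorphism `K` with respect to a bracket `br`. -/
def nijOf {X : Type} [AddCommGroup X] (br : X → X → X) (K : X → X) :
    X → X → X :=
  fun a b => br a b - br (K a) (K b) + K (br (K a) b) + K (br a (K b))

/-- With `N(x) = [I, ρ(Jx)] + I∘[ρ(x), I] ∈ End(E)`, the Nijenhuis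
tensor of `K = I × J` on the semidirect product `E ⋊ g` satisfies
`N_K((v,x),(w,y)) = (N(x)w − N(y)v, N_J(x,y))`, where `N_J` is the Nijenhuis
tensor of `J` on `g`. -/
theorem semidirect_nijenhuis_formula
    (g E : Type) [LieRing g] [LieAlgebra ℝ g]
    [AddCommGroup E] [Module ℝ E]
    (J : g →ₗ[ℝ] g) (hJ : ∀ x : g, J (J x) = -x)
    (I : Module.End ℝ E) (hI : ∀ v : E, I (I v) = -v)
    (ρ : g →ₗ⁅ℝ⁆ Module.End ℝ E) :
    ∀ (v w : E) (x y : g),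
      nijOf (sdBracket ρ) (fun c => (I c.1, J c.2)) (v, x) (w, y) =
        ((⁅I, ρ (J x)⁆ + I * ⁅ρ x, I⁆) w - (⁅I, ρ (J y)⁆ + I * ⁅ρ y, I⁆) v,
          ⁅x, y⁆ - ⁅J x, J y⁆ + J ⁅J x, y⁆ + J ⁅x, J y⁆) := by
  intro v w x y
  simp only [nijOf, sdBracket, Prod.mk_add_mk, Prod.mk_sub_mk, Prod.ext_iff,
    Ring.lie_def, 
    LinearMap.add_apply, LinearMap.sub_apply, Module.End.mul_apply, map_sub, map_add, map_neg, hI]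
  constructor
  · abel
  · trivial
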